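/- (Expansion depth bound) Let T* be a DT maximizing R over all DTs, let T be any DT, and let L = { l' ∈ T : H(l') ≥ −λ + n(l')/n }. If T \ L is nonempty and −λ·splits(T) + ∑_{l' ∈ L} H(l') + ∑_{l' ∈ T \ L} (−λ + n(l')/n) ≥ −λ·splits(T*) + H(T*), then splits(T) ≤ splits(T*) − 1 + (1 − H(T*))/λ; in particular every branch l ∈ T \ L satisfies splits(l) ≤ splits(T*) − 1 + (1 − H(T*))/λ. -/
import Mathlib


open Finset

/-- A branch: for each feature, either unused (`none`) or fixed to a category. -/
abbrev Branch (q : ℕ) (C : Fin q → ℕ) : Type := ∀ i : Fin q, Option (Fin (C i))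

/-- States: `Sum.inl l` is the (non-terminal) branch `l`, `Sum.inr l` is its terminal state `l̄`. -/
abbrev BState (q : ℕ) (C : Fin q → ℕ) : Type := Branch q C ⊕ Branch q C

/-- The root branch `Ω`. -/
def root (q : ℕ) (C : Fin q → ℕ) : Branch q C := fun _ => none

/-- The child of `l` obtained by fixing unused feature `i` to category `j`. -/
def child {q : ℕ} {C : Fin q → ℕ} (l : Branch q C) (i : Fin q) (j : Fin (C i)) : Branch q C :=
  Function.update l i (some j)

/-- `Children(l, i)`. -/
def childrenF {q : ℕ} {C : Fin q → ℕ} (l : Branch q C) (i : Fin q) : Finset (Branch q C) :=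
  Finset.univ.image (fun j : Fin (C i) => child l i j)

/-- A policy: `act l = none` is the terminal action `ā`, `act l = some i` splits on the
unused feature `i`. -/
structure Policy (q : ℕ) (C : Fin q → ℕ) where
  act : Branch q C → Option (Fin q)
  valid : ∀ l i, act l = some i → l i = none

/-- Transition set of the action taken by `π` at branch `l`. -/
def stepSet {q : ℕ} {C : Fin q → ℕ} (π : Policy q C) (l : Branch q C) : Finset (BState q C) :=
  match π.act l with
  | none => {Sum.inr l}
  | some i => (childrenF l i).image Sum.inl

/-- Trajectory of policy `π` from branch `l`. -/
def traj {q : ℕ} {C : Fin q → ℕ} (π : Policy q C) (l : Branch q C) : ℕ → Finset (BState q C)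
  | 0 => {Sum.inl l}
  | t + 1 => (traj π l t).biUnion
      (fun s => Sum.elim (fun lu => stepSet π lu) (fun lu => ({Sum.inr lu} : Finset (BState q C))) s)

/-- `τ_l^π`: minimal time `t ≥ 1` at which the trajectory consists of terminal states only. -/
noncomputable def tau {q : ℕ} {C : Fin q → ℕ} (π : Policy q C) (l : Branch q C) : ℕ :=
  sInf {t : ℕ | 1 ≤ t ∧ ∀ x ∈ traj π l t, x.isRight}

/-- A data point `x` is in branch `l`. -/
def inBranch {q : ℕ} {C : Fin q → ℕ} (l : Branch q C) (x : ∀ i : Fin q, Fin (C i)) : Prop :=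
  ∀ (i : Fin q) (c : Fin (C i)), l i = some c → x i = c

instance {q : ℕ} {C : Fin q → ℕ} (l : Branch q C) (x : ∀ i, Fin (C i)) :
    Decidable (inBranch l x) := by unfold inBranch; infer_instance

/-- `n(l)`: number of data points in `l`. -/
def nIn {q K : ℕ} {C : Fin q → ℕ} (D : Multiset ((∀ i : Fin q, Fin (C i)) × Fin K))
    (l : Branch q C) : ℕ :=
  (D.filter (fun p => inBranch l p.1)).card

/-- `n_k(l)`: number of data points in `l` of class `k`. -/
def nk {q K : ℕ} {C : Fin q → ℕ} (D : Multiset ((∀ i : Fin q, Fin (C i)) × Fin K))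
    (l : Branch q C) (k : Fin K) : ℕ :=
  (D.filter (fun p => inBranch l p.1 ∧ p.2 = k)).card

/-- `H(l) = (max_k n_k(l)) / n`. -/
noncomputable def Hb {q K : ℕ} {C : Fin q → ℕ} (D : Multiset ((∀ i : Fin q, Fin (C i)) × Fin K))
    (l : Branch q C) : ℝ :=
  ((Finset.univ.sup (fun k : Fin K => nk D l k) : ℕ) : ℝ) / (Multiset.card D : ℝ)

/-- Reward collected at a state of the trajectory: `H(l)` for the terminal action,
`-λ` for a split action, `0` at terminal states. -/
noncomputable def rew {q K : ℕ} {C : Fin q → ℕ}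
    (D : Multiset ((∀ i : Fin q, Fin (C i)) × Fin K)) (lam : ℝ) (π : Policy q C) :
    BState q C → ℝ
  | Sum.inl lu => match π.act lu with
      | none => Hb D lu
      | some _ => -lam
  | Sum.inr _ => 0

/-- Value `V^π(l)`. -/
noncomputable def V {q K : ℕ} {C : Fin q → ℕ}
    (D : Multiset ((∀ i : Fin q, Fin (C i)) × Fin K)) (lam : ℝ)
    (π : Policy q C) (l : Branch q C) : ℝ :=
  ∑ t ∈ Finset.range (tau π l), ∑ x ∈ traj π l t, rew D lam π x

/-- State-action value `Q^π(l, a)`. -/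
noncomputable def Qv {q K : ℕ} {C : Fin q → ℕ}
    (D : Multiset ((∀ i : Fin q, Fin (C i)) × Fin K)) (lam : ℝ)
    (π : Policy q C) (l : Branch q C) : Option (Fin q) → ℝ
  | none => Hb D l
  | some i => -lam + ∑ j : Fin (C i), V D lam π (child l i j)

/-- The available actions `A(l)`. -/
def Avail {q : ℕ} {C : Fin q → ℕ} (l : Branch q C) : Finset (Option (Fin q)) :=
  insert none ((Finset.univ.filter (fun i : Fin q => l i = none)).image some)

theorem Avail_nonempty {q : ℕ} {C : Fin q → ℕ} (l : Branch q C) : (Avail l).Nonempty :=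
  ⟨none, Finset.mem_insert_self _ _⟩

/-- The sub-DT of `π` rooted in `l`: the branches whose terminal states constitute
the trajectory at time `τ_l^π`. -/
noncomputable def subDTof {q : ℕ} {C : Fin q → ℕ} (π : Policy q C) (l : Branch q C) : Finset (Branch q C) :=
  (traj π l (tau π l)).image (Sum.elim id id)

/-- `SubDT l T m`: `T` is a sub-DT rooted in `l` obtained by `m` split operations. -/
inductive SubDT {q : ℕ} {C : Fin q → ℕ} : Branch q C → Finset (Branch q C) → ℕ → Prop
  | leaf (l : Branch q C) : SubDT l {l} 0
  | split (l : Branch q C) (T : Finset (Branch q C)) (m : ℕ) (l' : Branch q C) (i : Fin q)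
      (hT : SubDT l T m) (hmem : l' ∈ T) (hnone : l' i = none) :
      SubDT l (T.erase l' ∪ childrenF l' i) (m + 1)

/-- `H(T) = ∑_{l ∈ T} H(l)`. -/
noncomputable def HT {q K : ℕ} {C : Fin q → ℕ}
    (D : Multiset ((∀ i : Fin q, Fin (C i)) × Fin K)) (T : Finset (Branch q C)) : ℝ :=
  ∑ l ∈ T, Hb D l

/-- `splits(l)`: number of features used by branch `l`. -/
def nsplits {q : ℕ} {C : Fin q → ℕ} (l : Branch q C) : ℕ :=
  (Finset.univ.filter (fun i : Fin q => l i ≠ none)).card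

open scoped Classical

lemma nsplits_child {q : ℕ} {C : Fin q → ℕ} (l : Branch q C) (i : Fin q) (j : Fin (C i))
    (h : l i = none) : nsplits (child l i j) = nsplits l + 1 := by
  unfold nsplits child
  have : (Finset.univ.filter (fun i' : Fin q => Function.update l i (some j) i' ≠ none))
      = insert i (Finset.univ.filter (fun i' : Fin q => l i' ≠ none)) := by
    ext i'
    by_cases hii : i' = i
    · subst hii; simp [Function.update_self]
    · simp [Function.update_of_ne hii, hii]
  rw [this, Finset.card_insert_of_notMem (by simp [h])]

lemma SubDT.nsplits_le {q : ℕ} {C : Fin q → ℕ} {l : Branch q C} {T : Finset (Branch q C)}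
    {m : ℕ} (hT : SubDT l T m) : ∀ l' ∈ T, nsplits l' ≤ nsplits l + m := by
  induction hT with
  | leaf => intro l' hl'; simp_all
  | split T m l' i hT hmem hnone ih =>
      intro l'' hl''
      rcases Finset.mem_union.1 hl'' with h | h
      · exact le_trans (ih _ (Finset.mem_of_mem_erase h)) (by omega)
      · rcases Finset.mem_image.1 h with ⟨j, _, rfl⟩
        have := ih _ hmem
        rw [nsplits_child _ _ _ hnone]
        omega

lemma inBranch_child {q : ℕ} {C : Fin q → ℕ} (l : Branch q C) (i : Fin q) (j : Fin (C i))
    (h : l i = none) (x : ∀ i : Fin q, Fin (C i)) :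
    inBranch (child l i j) x ↔ inBranch l x ∧ x i = j := by
  constructor
  · intro hb
    refine ⟨fun i' c hc => ?_, hb i j (by simp [child, Function.update_self])⟩
    by_cases hii : i' = i
    · subst hii; rw [h] at hc; exact absurd hc (by simp)
    · exact hb i' c (by simpa [child, Function.update_of_ne hii] using hc)
  · rintro ⟨hb, hx⟩ i' c hc
    by_cases hii : i' = i
    · subst hii
      simp only [child, Function.update_self] at hc
      cases hc; exact hx
    · exact hb i' c (by simpa [child, Function.update_of_ne hii] using hc)

lemma fiber_card {α : Type*} {N : ℕ} (M : Multiset α) (f : α → Fin N) :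
    ∑ j : Fin N, (M.filter (fun a => f a = j)).card = Multiset.card M := by
  induction M using Multiset.induction with
  | empty => simp
  | cons a s ih =>
      simp only [Multiset.filter_cons, Multiset.card_add, Finset.sum_add_distrib, ih,
        Multiset.card_cons]
      rw [add_comm]
      congr 1
      have : ∀ j : Fin N, Multiset.card (if f a = j then ({a} : Multiset α) else 0)
          = if f a = j then 1 else 0 := by
        intro j; split <;> simp
      simp only [this, Finset.sum_ite_eq, Finset.mem_univ, if_true]

lemma sum_nIn_children {q K : ℕ} {C : Fin q → ℕ}
    (D : Multiset ((∀ i : Fin q, Fin (C i)) × Fin K)) (l : Branch q C) (i : Fin q)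
    (h : l i = none) : ∑ j : Fin (C i), nIn D (child l i j) = nIn D l := by
  unfold nIn
  have key : ∀ j : Fin (C i),
      D.filter (fun p => inBranch (child l i j) p.1)
        = (D.filter (fun p => inBranch l p.1)).filter (fun p => p.1 i = j) := by
    intro j
    rw [Multiset.filter_filter]
    apply Multiset.filter_congr
    intro p _
    constructor
    · intro hp
      have := (inBranch_child l i j h p.1).1 hp
      exact ⟨this.2, this.1⟩
    · intro hp; exact (inBranch_child l i j h p.1).2 ⟨hp.2, hp.1⟩
  simp only [key]
  exact fiber_card _ _

lemma child_injective {q : ℕ} {C : Fin q → ℕ} (l : Branch q C) (i : Fin q) :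
    Function.Injective (child l i) := by
  intro j j' hjj
  have := congrFun hjj i
  simpa [child, Function.update_self] using this

lemma SubDT.sum_nIn_le {q K : ℕ} {C : Fin q → ℕ}
    (D : Multiset ((∀ i : Fin q, Fin (C i)) × Fin K)) {l : Branch q C}
    {T : Finset (Branch q C)} {m : ℕ} (hT : SubDT l T m) :
    ∑ l' ∈ T, nIn D l' ≤ nIn D l := by
  induction hT with
  | leaf => simp
  | split T m l' i hT hmem hnone ih =>
      have hchild : ∑ l'' ∈ childrenF l' i, nIn D l'' ≤ nIn D l' := by
        rw [childrenF, Finset.sum_image (fun a _ b _ hab => child_injective l' i hab)]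
        exact le_of_eq (sum_nIn_children D l' i hnone)
      calc ∑ l'' ∈ T.erase l' ∪ childrenF l' i, nIn D l''
          ≤ ∑ l'' ∈ T.erase l', nIn D l'' + ∑ l'' ∈ childrenF l' i, nIn D l'' := by
            rw [show T.erase l' ∪ childrenF l' i
                = T.erase l' ∪ (childrenF l' i \ T.erase l') from by
                  rw [Finset.union_sdiff_self_eq_union],
              Finset.sum_union Finset.disjoint_sdiff]
            gcongr
            exact Finset.sdiff_subset
        _ ≤ ∑ l'' ∈ T.erase l', nIn D l'' + nIn D l' := by gcongr
        _ = ∑ l'' ∈ T, nIn D l'' := Finset.sum_erase_add _ _ hmem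
        _ ≤ nIn D l := ih

lemma Hb_le_nIn_div {q K : ℕ} {C : Fin q → ℕ}
    (D : Multiset ((∀ i : Fin q, Fin (C i)) × Fin K)) (l : Branch q C) :
    Hb D l ≤ (nIn D l : ℝ) / (Multiset.card D : ℝ) := by
  rcases eq_or_ne D 0 with rfl | hD
  · simp [Hb, nk, nIn]
  have hn : (0 : ℝ) < (Multiset.card D : ℝ) := by
    exact_mod_cast Multiset.card_pos.2 hD
  rw [Hb, div_le_div_iff_of_pos_right hn]
  have : Finset.univ.sup (fun k : Fin K => nk D l k) ≤ nIn D l := by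
    apply Finset.sup_le
    intro k _
    exact Multiset.card_le_card (Multiset.monotone_filter_right D (fun p hp => hp.1))
  exact_mod_cast this

/-- **Expansion depth bound.** With `T*` an optimal DT, `T` any DT and
`L = { l' ∈ T : H(l') ≥ -λ + n(l')/n }`: if `T \ L ≠ ∅` and
`-λ·splits(T) + ∑_{l'∈L} H(l') + ∑_{l'∈T\L} (-λ + n(l')/n) ≥ R(T*)`, then
`splits(T) ≤ splits(T*) - 1 + (1 - H(T*))/λ`, and in particular every branch
`l ∈ T \ L` satisfies `splits(l) ≤ splits(T*) - 1 + (1 - H(T*))/λ`. -/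
theorem expansion_depth_bound {q K : ℕ} (hq : 2 ≤ q) (hK : 2 ≤ K)
    {C : Fin q → ℕ} (hC : ∀ i, 2 ≤ C i)
    (D : Multiset ((∀ i : Fin q, Fin (C i)) × Fin K)) (hD : D ≠ 0)
    (lam : ℝ) (hlam0 : 0 < lam) (hlam1 : lam < 1)
    (Ts : Finset (Branch q C)) (ms : ℕ) (hTs : SubDT (root q C) Ts ms)
    (hmax : ∀ (T : Finset (Branch q C)) (m : ℕ), SubDT (root q C) T m →
      -lam * m + HT D T ≤ -lam * ms + HT D Ts)
    (T : Finset (Branch q C)) (m : ℕ) (hT : SubDT (root q C) T m)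
    (L : Finset (Branch q C))
    (hL : L = T.filter (fun l' => -lam + (nIn D l' : ℝ) / (Multiset.card D : ℝ) ≤ Hb D l'))
    (hne : (T \ L).Nonempty)
    (hineq : -lam * ms + HT D Ts ≤
      -lam * m + (∑ l' ∈ L, Hb D l') +
        ∑ l' ∈ T \ L, (-lam + (nIn D l' : ℝ) / (Multiset.card D : ℝ))) :
    (m : ℝ) ≤ (ms : ℝ) - 1 + (1 - HT D Ts) / lam ∧
    ∀ l' ∈ T \ L, (nsplits l' : ℝ) ≤ (ms : ℝ) - 1 + (1 - HT D Ts) / lam := by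
  have hn : (0 : ℝ) < (Multiset.card D : ℝ) := by
    exact_mod_cast Multiset.card_pos.2 hD
  set n : ℝ := (Multiset.card D : ℝ)
  -- sum of nIn over T is at most card D
  have hsum : ∑ l' ∈ T, (nIn D l' : ℝ) / n ≤ 1 := by
    rw [← Finset.sum_div, div_le_one hn]
    have h1 : ∑ l' ∈ T, nIn D l' ≤ nIn D (root q C) := hT.sum_nIn_le D
    have h2 : nIn D (root q C) ≤ Multiset.card D := by
      unfold nIn; exact Multiset.card_le_card (Multiset.filter_le _ _)
    calc ∑ l' ∈ T, ((nIn D l' : ℝ)) = ((∑ l' ∈ T, nIn D l' : ℕ) : ℝ) := by push_cast; ring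
      _ ≤ ((Multiset.card D : ℕ) : ℝ) := by exact_mod_cast le_trans h1 h2
      _ = n := rfl
  have hLsub : L ⊆ T := by rw [hL]; exact Finset.filter_subset _ _
  have hsplit : ∑ l' ∈ T \ L, (nIn D l' : ℝ) / n + ∑ l' ∈ L, (nIn D l' : ℝ) / n
      = ∑ l' ∈ T, (nIn D l' : ℝ) / n := Finset.sum_sdiff hLsub
  have hLH : ∑ l' ∈ L, Hb D l' ≤ ∑ l' ∈ L, (nIn D l' : ℝ) / n :=
    Finset.sum_le_sum (fun l' _ => Hb_le_nIn_div D l')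
  have hcard : (1 : ℝ) ≤ ((T \ L).card : ℝ) := by
    exact_mod_cast Finset.card_pos.2 hne
  have hrw : ∑ l' ∈ T \ L, (-lam + (nIn D l' : ℝ) / n)
      = -lam * ((T \ L).card : ℝ) + ∑ l' ∈ T \ L, (nIn D l' : ℝ) / n := by
    rw [Finset.sum_add_distrib, Finset.sum_const, nsmul_eq_mul]
    ring
  have hkey : lam * m ≤ lam * ms - lam + 1 - HT D Ts := by
    have h0 : -lam * ms + HT D Ts ≤ -lam * m + 1 - lam := by
      calc -lam * ms + HT D Ts
          ≤ -lam * m + (∑ l' ∈ L, Hb D l') + ∑ l' ∈ T \ L, (-lam + (nIn D l' : ℝ) / n) :=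
            hineq
        _ ≤ -lam * m + (∑ l' ∈ L, (nIn D l' : ℝ) / n)
            + (-lam * ((T \ L).card : ℝ) + ∑ l' ∈ T \ L, (nIn D l' : ℝ) / n) := by
            rw [hrw]; linarith
        _ = -lam * m + (∑ l' ∈ T, (nIn D l' : ℝ) / n) - lam * ((T \ L).card : ℝ) := by
            rw [← hsplit]; ring
        _ ≤ -lam * m + 1 - lam := by nlinarith
    linarith
  have hmain : (m : ℝ) ≤ (ms : ℝ) - 1 + (1 - HT D Ts) / lam := by
    have hcancel : (1 - HT D Ts) / lam * lam = 1 - HT D Ts :=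
      div_mul_cancel₀ _ (ne_of_gt hlam0)
    nlinarith [hkey, hcancel, hlam0]
  refine ⟨hmain, fun l' hl' => ?_⟩
  have hmem : l' ∈ T := (Finset.mem_sdiff.1 hl').1
  have hle : nsplits l' ≤ nsplits (root q C) + m := hT.nsplits_le l' hmem
  have hroot : nsplits (root q C) = 0 := by simp [nsplits, root]
  rw [hroot, zero_add] at hle
  calc (nsplits l' : ℝ) ≤ (m : ℝ) := by exact_mod_cast hle
    _ ≤ _ := hmain
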